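/- Let Γ : [0,∞) → (0,∞) be a decreasing function with Γ(r) ∼ r^b e^{−ηr} as r → ∞ for some b ∈ ℝ and η > 0. Then there exist ρ₀ > 0 and C > 0 (independent of K) such that for all K ∈ ℕ₊, all points Q_1,…,Q_K ∈ ℝ^N with minimal mutual distance ρ ≥ ρ₀, and every index j₀, the sum Σ_{j ≠ j₀} Γ(|Q_{j₀} − Q_j|) is at most C Γ(ρ). -/

import Mathlib

open Metric MeasureTheory Module

open scoped Classical

lemma packing_aux (N : ℕ) (x : EuclideanSpace ℝ (Fin N)) (T : Finset (EuclideanSpace ℝ (Fin N)))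
    (ρ R : ℝ) (hρ : 0 < ρ) (hR : 0 ≤ R)
    (hsep : ∀ p ∈ T, ∀ q ∈ T, p ≠ q → ρ ≤ dist p q)
    (hball : ∀ p ∈ T, dist p x ≤ R) :
    (T.card : ℝ) * (ρ / 2) ^ N ≤ (R + ρ / 2) ^ N := by
  rcases Nat.eq_zero_or_pos N with hN | hN
  · subst hN
    simp only [pow_zero, mul_one]
    have : T.card ≤ 1 := by
      apply Finset.card_le_one.2
      intro p hp q hq
      by_contra hpq
      have := hsep p hp q hq hpq
      have : dist p q = 0 := by
        have : p = q := Subsingleton.elim p q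
        simp [this]
      linarith
    exact_mod_cast this
  · haveI : Nonempty (Fin N) := ⟨⟨0, hN⟩⟩
    haveI : Nontrivial (EuclideanSpace ℝ (Fin N)) := inferInstance
    have hdisj : (T : Set (EuclideanSpace ℝ (Fin N))).PairwiseDisjoint
        (fun p => ball p (ρ / 2)) := by
      intro p hp q hq hpq
      exact ball_disjoint_ball (by linarith [hsep p hp q hq hpq])
    have hmeas := measure_biUnion_finset (μ := volume) hdisj (fun p _ => measurableSet_ball)
    have hsub : (⋃ p ∈ T, ball p (ρ / 2)) ⊆ ball x (R + ρ / 2) := by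
      intro y hy
      simp only [Set.mem_iUnion, mem_ball] at hy ⊢
      obtain ⟨p, hp, hyp⟩ := hy
      calc dist y x ≤ dist y p + dist p x := dist_triangle _ _ _
        _ < R + ρ / 2 := by have := hball p hp; linarith
    have hle : ∑ p ∈ T, volume (ball p (ρ / 2)) ≤ volume (ball x (R + ρ / 2)) := by
      rw [← hmeas]; exact measure_mono hsub
    have hn : finrank ℝ (EuclideanSpace ℝ (Fin N)) = N := finrank_euclideanSpace_fin
    have hb : ∀ p : EuclideanSpace ℝ (Fin N), volume (ball p (ρ / 2)) =
        ENNReal.ofReal ((ρ / 2) ^ N) * volume (ball (0 : EuclideanSpace ℝ (Fin N)) 1) := by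
      intro p
      rw [Measure.addHaar_ball volume p (by linarith : (0:ℝ) ≤ ρ / 2), hn]
    rw [Finset.sum_congr rfl (fun p _ => hb p), Finset.sum_const, nsmul_eq_mul,
      Measure.addHaar_ball volume x (by linarith : (0:ℝ) ≤ R + ρ / 2), hn] at hle
    set v := volume (ball (0 : EuclideanSpace ℝ (Fin N)) 1) with hv
    have hv0 : v ≠ 0 := (measure_ball_pos volume 0 one_pos).ne'
    have hvt : v ≠ ⊤ := measure_ball_lt_top.ne
    rw [← mul_assoc] at hle
    have := (ENNReal.mul_le_mul_iff_left hv0 hvt).mp hle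
    have h2 : ENNReal.ofReal ((T.card : ℝ) * (ρ / 2) ^ N) ≤ ENNReal.ofReal ((R + ρ / 2) ^ N) := by
      rwa [ENNReal.ofReal_mul (by positivity), ENNReal.ofReal_natCast]
    exact (ENNReal.ofReal_le_ofReal_iff (by positivity)).mp h2

theorem stmt_2 (N : ℕ) (Γ : ℝ → ℝ) (b η : ℝ) (hη : 0 < η)
    (hpos : ∀ r : ℝ, 0 ≤ r → 0 < Γ r)
    (hdec : ∀ r s : ℝ, 0 ≤ r → r ≤ s → Γ s ≤ Γ r)
    (hasymp : ∃ c₁ c₂ r₀ : ℝ, 0 < c₁ ∧ 0 < c₂ ∧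
      ∀ r : ℝ, r₀ ≤ r →
        c₁ * r ^ b * Real.exp (-η * r) ≤ Γ r ∧ Γ r ≤ c₂ * r ^ b * Real.exp (-η * r)) :
    ∃ ρ₀ C : ℝ, 0 < ρ₀ ∧ 0 < C ∧
      ∀ (K : ℕ), 0 < K →
        ∀ (Q : Fin K → EuclideanSpace ℝ (Fin N)) (ρ : ℝ), ρ₀ ≤ ρ →
          (∀ j l : Fin K, j ≠ l → ρ ≤ dist (Q j) (Q l)) →
          ∀ j₀ : Fin K,
            ∑ j ∈ Finset.univ.filter (· ≠ j₀), Γ (dist (Q j₀) (Q j)) ≤ C * Γ ρ := by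
  obtain ⟨c₁, c₂, r₀, hc₁, hc₂, hbound⟩ := hasymp
  set B : ℝ := max b 0 with hBdef
  have hB0 : (0:ℝ) ≤ B := le_max_right _ _
  have hbB : b ≤ B := le_max_left _ _
  have hexpm1 : Real.exp (-1) < 1 := Real.exp_lt_one_iff.mpr (by norm_num)
  refine ⟨max r₀ (max 1 ((N + B + 1)/η)),
    (c₂/c₁) * 5^N * Real.exp ((N:ℝ)+B) * Real.exp 1 * (1 - Real.exp (-1))⁻¹, ?_, ?_, ?_⟩
  · exact lt_of_lt_of_le one_pos (le_trans (le_max_left _ _) (le_max_right _ _))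
  · have h1 : (0:ℝ) < 1 - Real.exp (-1) := by linarith
    positivity
  · intro K hK Q ρ hρ hsep j₀
    have hρ1 : (1:ℝ) ≤ ρ := le_trans (le_trans (le_max_left _ _) (le_max_right _ _)) hρ
    have hρpos : (0:ℝ) < ρ := lt_of_lt_of_le one_pos hρ1
    have hr₀ρ : r₀ ≤ ρ := le_trans (le_max_left _ _) hρ
    have hηρ : (N:ℝ) + B + 1 ≤ η * ρ := by
      have h := le_trans (le_trans (le_max_right _ _) (le_max_right _ _)) hρ
      rw [div_le_iff₀ hη] at h
      linarith [mul_comm ρ η]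
    have hΓρ : 0 < Γ ρ := hpos ρ (by linarith)
    set S := Finset.univ.filter (· ≠ j₀) with hS
    set d : Fin K → ℝ := fun j => dist (Q j₀) (Q j) with hd
    have hdS : ∀ j ∈ S, ρ ≤ d j := by
      intro j hj
      rw [hS, Finset.mem_filter] at hj
      exact hsep j₀ j (fun h => hj.2 h.symm)
    set f : Fin K → ℕ := fun j => ⌊d j / ρ⌋₊ with hf
    have hfl : ∀ j ∈ S, (f j : ℝ) * ρ ≤ d j := by
      intro j hj
      have h0 : 0 ≤ d j / ρ := by positivity
      have := Nat.floor_le h0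
      calc (f j : ℝ) * ρ ≤ (d j / ρ) * ρ := by
            exact mul_le_mul_of_nonneg_right this (le_of_lt hρpos)
        _ = d j := by field_simp
    have hfu : ∀ j, d j ≤ ((f j : ℝ) + 1) * ρ := by
      intro j
      have := le_of_lt (Nat.lt_floor_add_one (d j / ρ))
      calc d j = (d j / ρ) * ρ := by field_simp
        _ ≤ ((f j : ℝ) + 1) * ρ := mul_le_mul_of_nonneg_right this (le_of_lt hρpos)
    have hf1 : ∀ j ∈ S, 1 ≤ f j := by
      intro j hj
      apply Nat.le_floor
      rw [Nat.cast_one, le_div_iff₀ hρpos, one_mul]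
      exact hdS j hj
    -- Step A
    have stepA : ∑ j ∈ S, Γ (d j) ≤ ∑ j ∈ S, Γ ((f j : ℝ) * ρ) := by
      apply Finset.sum_le_sum
      intro j hj
      exact hdec _ _ (by positivity) (hfl j hj)
    -- Step B : fiberwise
    have stepB : ∑ j ∈ S, Γ ((f j : ℝ) * ρ) =
        ∑ m ∈ S.image f, ((S.filter (fun j => f j = m)).card : ℝ) * Γ ((m : ℝ) * ρ) := by
      rw [← Finset.sum_fiberwise_of_maps_to (fun j hj => Finset.mem_image_of_mem f hj)
        (fun j => Γ ((f j : ℝ) * ρ))]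
      apply Finset.sum_congr rfl
      intro m _
      rw [Finset.sum_congr rfl (fun j hj => ?_), Finset.sum_const, nsmul_eq_mul]
      rw [(Finset.mem_filter.mp hj).2]
    -- per-fiber card bound
    have cardb : ∀ m ∈ S.image f,
        ((S.filter (fun j => f j = m)).card : ℝ) ≤ (2 * (m:ℝ) + 3) ^ N := by
      intro m _
      set F := S.filter (fun j => f j = m) with hF
      have hinj : Set.InjOn Q F := by
        intro j _ l _ hql
        by_contra hjl
        have := hsep j l hjl
        rw [hql] at this
        simp at this
        linarith
      have hcard : (F.image Q).card = F.card := Finset.card_image_of_injOn hinj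
      have hsep' : ∀ p ∈ F.image Q, ∀ q ∈ F.image Q, p ≠ q → ρ ≤ dist p q := by
        intro p hp q hq hpq
        obtain ⟨j, hj, rfl⟩ := Finset.mem_image.mp hp
        obtain ⟨l, hl, rfl⟩ := Finset.mem_image.mp hq
        exact hsep j l (fun h => hpq (by rw [h]))
      have hball' : ∀ p ∈ F.image Q, dist p (Q j₀) ≤ ((m:ℝ) + 1) * ρ := by
        intro p hp
        obtain ⟨j, hj, rfl⟩ := Finset.mem_image.mp hp
        have hjm : f j = m := (Finset.mem_filter.mp hj).2
        have h := hfu j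
        rw [hjm] at h
        rw [dist_comm]
        exact h
      have hpack := packing_aux N (Q j₀) (F.image Q) ρ (((m:ℝ) + 1) * ρ) hρpos
        (by positivity) hsep' hball'
      have h2 : (((m:ℝ)+1)*ρ + ρ/2) = (2*(m:ℝ)+3) * (ρ/2) := by ring
      rw [h2, mul_pow, hcard] at hpack
      have hρ2 : (0:ℝ) < (ρ/2)^N := by positivity
      exact (mul_le_mul_iff_of_pos_right hρ2).mp hpack
    -- gamma ratio bound
    have gammab : ∀ m : ℕ, 1 ≤ m → Γ ((m:ℝ) * ρ) ≤
        (c₂/c₁) * (m:ℝ) ^ b * Real.exp (-(η*ρ) * ((m:ℝ) - 1)) * Γ ρ := by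
      intro m hm
      have hm1 : (1:ℝ) ≤ (m:ℝ) := by exact_mod_cast hm
      have hmρ : r₀ ≤ (m:ℝ) * ρ := by nlinarith
      have h1 := (hbound ((m:ℝ)*ρ) hmρ).2
      have h2 := (hbound ρ hr₀ρ).1
      have hsplit : ((m:ℝ)*ρ) ^ b = (m:ℝ)^b * ρ^b :=
        Real.mul_rpow (by linarith) (le_of_lt hρpos)
      have hexp : Real.exp (-η*((m:ℝ)*ρ)) =
          Real.exp (-(η*ρ) * ((m:ℝ) - 1)) * Real.exp (-η*ρ) := by
        rw [← Real.exp_add]; congr 1; ring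
      have hkey : c₂ * ((m:ℝ)*ρ)^b * Real.exp (-η*((m:ℝ)*ρ)) =
          (c₂/c₁) * (m:ℝ)^b * Real.exp (-(η*ρ)*((m:ℝ)-1)) *
            (c₁ * ρ^b * Real.exp (-η*ρ)) := by
        rw [hsplit, hexp]; field_simp
      calc Γ ((m:ℝ)*ρ) ≤ c₂ * ((m:ℝ)*ρ)^b * Real.exp (-η*((m:ℝ)*ρ)) := h1
        _ = (c₂/c₁) * (m:ℝ)^b * Real.exp (-(η*ρ)*((m:ℝ)-1)) *
            (c₁ * ρ^b * Real.exp (-η*ρ)) := hkey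
        _ ≤ (c₂/c₁) * (m:ℝ)^b * Real.exp (-(η*ρ)*((m:ℝ)-1)) * Γ ρ := by
            apply mul_le_mul_of_nonneg_left h2
            have : (0:ℝ) ≤ (m:ℝ)^b := Real.rpow_nonneg (by linarith) b
            positivity
    -- polynomial bound
    have polyb : ∀ m : ℕ, 1 ≤ m →
        (2*(m:ℝ)+3)^N * (m:ℝ)^b ≤ 5^N * Real.exp (((N:ℝ)+B) * m) := by
      intro m hm
      have hm1 : (1:ℝ) ≤ (m:ℝ) := by exact_mod_cast hm
      have s1 : (2*(m:ℝ)+3)^N ≤ (5*(m:ℝ))^N :=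
        pow_le_pow_left₀ (by linarith) (by linarith) N
      have s2 : (5*(m:ℝ))^N = 5^N * (m:ℝ)^(N:ℝ) := by
        rw [mul_pow, Real.rpow_natCast]
      have s3 : (m:ℝ)^(N:ℝ) * (m:ℝ)^b = (m:ℝ)^((N:ℝ)+b) :=
        (Real.rpow_add (by linarith) _ _).symm
      have s4 : (m:ℝ)^((N:ℝ)+b) ≤ (m:ℝ)^((N:ℝ)+B) :=
        Real.rpow_le_rpow_of_exponent_le hm1 (by linarith)
      have s5 : (m:ℝ)^((N:ℝ)+B) ≤ (Real.exp (m:ℝ))^((N:ℝ)+B) := by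
        apply Real.rpow_le_rpow (by linarith) _ (by positivity)
        linarith [Real.add_one_le_exp (m:ℝ)]
      have s6 : (Real.exp (m:ℝ))^((N:ℝ)+B) = Real.exp (((N:ℝ)+B) * m) := by
        rw [← Real.exp_mul]; ring_nf
      have hmb : (0:ℝ) ≤ (m:ℝ)^b := Real.rpow_nonneg (by linarith) b
      calc (2*(m:ℝ)+3)^N * (m:ℝ)^b ≤ (5*(m:ℝ))^N * (m:ℝ)^b :=
            mul_le_mul_of_nonneg_right s1 hmb
        _ = 5^N * ((m:ℝ)^(N:ℝ) * (m:ℝ)^b) := by rw [s2]; ring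
        _ = 5^N * (m:ℝ)^((N:ℝ)+b) := by rw [s3]
        _ ≤ 5^N * (m:ℝ)^((N:ℝ)+B) := by
            apply mul_le_mul_of_nonneg_left s4 (by positivity)
        _ ≤ 5^N * (Real.exp (m:ℝ))^((N:ℝ)+B) := by
            apply mul_le_mul_of_nonneg_left s5 (by positivity)
        _ = 5^N * Real.exp (((N:ℝ)+B) * m) := by rw [s6]
    -- per-m total bound
    set D : ℝ := (c₂/c₁) * 5^N * Real.exp ((N:ℝ)+B) * Real.exp 1 * Γ ρ with hD
    have hD0 : 0 ≤ D := by positivity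
    have termb : ∀ m ∈ S.image f,
        ((S.filter (fun j => f j = m)).card : ℝ) * Γ ((m:ℝ)*ρ) ≤
          D * (Real.exp (-1))^m := by
      intro m hmi
      obtain ⟨j, hj, hjm⟩ := Finset.mem_image.mp hmi
      have hm : 1 ≤ m := hjm ▸ hf1 j hj
      have hm1 : (1:ℝ) ≤ (m:ℝ) := by exact_mod_cast hm
      have hΓm : 0 < Γ ((m:ℝ)*ρ) := hpos _ (by positivity)
      have hmb : (0:ℝ) ≤ (m:ℝ)^b := Real.rpow_nonneg (by linarith) b
      have step1 : ((S.filter (fun j => f j = m)).card : ℝ) * Γ ((m:ℝ)*ρ) ≤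
          (2*(m:ℝ)+3)^N * ((c₂/c₁) * (m:ℝ)^b * Real.exp (-(η*ρ)*((m:ℝ)-1)) * Γ ρ) := by
        apply mul_le_mul (cardb m hmi) (gammab m hm) (le_of_lt hΓm) (by positivity)
      have step2 : (2*(m:ℝ)+3)^N * ((c₂/c₁) * (m:ℝ)^b * Real.exp (-(η*ρ)*((m:ℝ)-1)) * Γ ρ)
          = ((2*(m:ℝ)+3)^N * (m:ℝ)^b) * Real.exp (-(η*ρ)*((m:ℝ)-1)) * ((c₂/c₁) * Γ ρ) := by
        ring
      have step3 : ((2*(m:ℝ)+3)^N * (m:ℝ)^b) * Real.exp (-(η*ρ)*((m:ℝ)-1)) ≤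
          (5^N * Real.exp (((N:ℝ)+B) * m)) * Real.exp (-(η*ρ)*((m:ℝ)-1)) :=
        mul_le_mul_of_nonneg_right (polyb m hm) (le_of_lt (Real.exp_pos _))
      have step4 : Real.exp (((N:ℝ)+B) * m) * Real.exp (-(η*ρ)*((m:ℝ)-1)) ≤
          Real.exp ((N:ℝ)+B) * (Real.exp 1 * (Real.exp (-1))^m) := by
        rw [← Real.exp_add]
        have hpow : (Real.exp (-1))^m = Real.exp (-(m:ℝ)) := by
          rw [← Real.exp_nat_mul]; ring_nf
        rw [hpow, ← Real.exp_add, ← Real.exp_add]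
        apply Real.exp_le_exp.mpr
        nlinarith [mul_nonneg (sub_nonneg.mpr hm1) (by linarith : (0:ℝ) ≤ η*ρ - 1 - ((N:ℝ)+B))]
      calc ((S.filter (fun j => f j = m)).card : ℝ) * Γ ((m:ℝ)*ρ)
          ≤ ((2*(m:ℝ)+3)^N * (m:ℝ)^b) * Real.exp (-(η*ρ)*((m:ℝ)-1)) * ((c₂/c₁) * Γ ρ) := by
            rw [← step2]; exact step1
        _ ≤ (5^N * Real.exp (((N:ℝ)+B) * m)) * Real.exp (-(η*ρ)*((m:ℝ)-1)) * ((c₂/c₁) * Γ ρ) := by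
            apply mul_le_mul_of_nonneg_right step3 (by positivity)
        _ = 5^N * (Real.exp (((N:ℝ)+B) * m) * Real.exp (-(η*ρ)*((m:ℝ)-1))) * ((c₂/c₁) * Γ ρ) := by
            ring
        _ ≤ 5^N * (Real.exp ((N:ℝ)+B) * (Real.exp 1 * (Real.exp (-1))^m)) * ((c₂/c₁) * Γ ρ) := by
            apply mul_le_mul_of_nonneg_right _ (by positivity)
            apply mul_le_mul_of_nonneg_left step4 (by positivity)
        _ = D * (Real.exp (-1))^m := by rw [hD]; ring
    -- sum up
    have hsum : ∑ m ∈ S.image f, (Real.exp (-1))^m ≤ (1 - Real.exp (-1))⁻¹ := by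
      have hsummable := summable_geometric_of_lt_one (le_of_lt (Real.exp_pos (-1))) hexpm1
      calc ∑ m ∈ S.image f, (Real.exp (-1))^m ≤ ∑' m : ℕ, (Real.exp (-1))^m :=
            Summable.sum_le_tsum _ (fun i _ => by positivity) hsummable
        _ = (1 - Real.exp (-1))⁻¹ := tsum_geometric_of_lt_one (le_of_lt (Real.exp_pos _)) hexpm1
    calc ∑ j ∈ S, Γ (d j) ≤ ∑ j ∈ S, Γ ((f j : ℝ) * ρ) := stepA
      _ = ∑ m ∈ S.image f, ((S.filter (fun j => f j = m)).card : ℝ) * Γ ((m : ℝ) * ρ) := stepB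
      _ ≤ ∑ m ∈ S.image f, D * (Real.exp (-1))^m := Finset.sum_le_sum termb
      _ = D * ∑ m ∈ S.image f, (Real.exp (-1))^m := by rw [Finset.mul_sum]
      _ ≤ D * (1 - Real.exp (-1))⁻¹ := mul_le_mul_of_nonneg_left hsum hD0
      _ = (c₂/c₁) * 5^N * Real.exp ((N:ℝ)+B) * Real.exp 1 * (1 - Real.exp (-1))⁻¹ * Γ ρ := by
          rw [hD]; ring
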